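/- If t is a positive integer with t ≡ 3 or 11 (mod 12), then c₃(t) = (t³ − 16t² + 73t − 102)/6. -/

import Mathlib

/-- A 3×3 magic square with entries bounded above (strictly) by `t`: pairwise distinct
positive integer entries less than `t`, with all row sums, column sums, and both main
diagonal sums equal to one another. -/
def IsBoundedMagicSquare3 (t : ℕ) (M : Matrix (Fin 3) (Fin 3) ℕ) : Prop :=
  (∀ i j, 0 < M i j ∧ M i j < t) ∧
  (Function.Injective fun p : Fin 3 × Fin 3 => M p.1 p.2) ∧
  ∃ s, (∀ i, ∑ j, M i j = s) ∧ (∀ j, ∑ i, M i j = s) ∧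
    M 0 0 + M 1 1 + M 2 2 = s ∧ M 0 2 + M 1 1 + M 2 0 = s

/-- The number of 3×3 magic squares all of whose entries are less than `t`. -/
noncomputable def c3 (t : ℕ) : ℕ :=
  Set.ncard {M : Matrix (Fin 3) (Fin 3) ℕ | IsBoundedMagicSquare3 t M}

open Finset

/-! ### Parametrization of 3×3 magic squares -/

def MS3.off (a b : ℤ) : Fin 3 → Fin 3 → ℤ
  | ⟨0,_⟩, ⟨0,_⟩ => a
  | ⟨0,_⟩, ⟨1,_⟩ => -a-b
  | ⟨0,_⟩, ⟨2,_⟩ => b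
  | ⟨1,_⟩, ⟨0,_⟩ => -a+b
  | ⟨1,_⟩, ⟨1,_⟩ => 0
  | ⟨1,_⟩, ⟨2,_⟩ => a-b
  | ⟨2,_⟩, ⟨0,_⟩ => -b
  | ⟨2,_⟩, ⟨1,_⟩ => a+b
  | ⟨2,_⟩, ⟨2,_⟩ => -a

def MS3.Phi (c a b : ℤ) : Matrix (Fin 3) (Fin 3) ℕ :=
  fun i j => (c + MS3.off a b i j).toNat

def MS3.pcond (t : ℕ) (c a b : ℤ) : Prop :=
  a ≠ 0 ∧ b ≠ 0 ∧ a ≠ b ∧ a ≠ -b ∧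
  b ≠ 2*a ∧ b ≠ -(2*a) ∧ a ≠ 2*b ∧ a ≠ -(2*b) ∧
  1 + (a.natAbs + b.natAbs : ℤ) ≤ c ∧ c + (a.natAbs + b.natAbs : ℤ) ≤ (t:ℤ) - 1

namespace MS3

def condab (a b : ℤ) : Prop :=
  a ≠ 0 ∧ b ≠ 0 ∧ a ≠ b ∧ a ≠ -b ∧ b ≠ 2*a ∧ b ≠ -(2*a) ∧ a ≠ 2*b ∧ a ≠ -(2*b)

instance : ∀ a b : ℤ, Decidable (condab a b) := fun a b => by
  unfold condab; infer_instance

noncomputable def G (t : ℕ) : Finset (ℤ × ℤ) :=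
  ((Finset.Icc (-(t:ℤ)) t) ×ˢ (Finset.Icc (-(t:ℤ)) t)).filter
    (fun ab => condab ab.1 ab.2)

noncomputable def F (t : ℕ) : Finset (ℤ × ℤ × ℤ) :=
  (G t).biUnion (fun ab =>
    (Finset.Icc (1 + (ab.1.natAbs + ab.2.natAbs : ℤ))
      ((t:ℤ) - 1 - (ab.1.natAbs + ab.2.natAbs))).image (fun c => (c, ab.1, ab.2)))

def Np (t : ℕ) : Finset (ℕ × ℕ) :=
  ((Finset.Icc 1 t) ×ˢ (Finset.Icc 1 t)).filter
    (fun ab => ab.1 ≠ ab.2 ∧ ab.2 ≠ 2*ab.1 ∧ ab.1 ≠ 2*ab.2)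

noncomputable def Gp (t : ℕ) : Finset (ℤ × ℤ) :=
  ((Finset.Icc (1:ℤ) t) ×ˢ (Finset.Icc (1:ℤ) t)).filter
    (fun ab => ab.1 ≠ ab.2 ∧ ab.2 ≠ 2*ab.1 ∧ ab.1 ≠ 2*ab.2)

lemma mem_F (t : ℕ) (p : ℤ × ℤ × ℤ) : p ∈ F t ↔ pcond t p.1 p.2.1 p.2.2 := by
  obtain ⟨c, a, b⟩ := p
  simp only [F, G, mem_biUnion, mem_filter, mem_product, mem_Icc, mem_image]
  simp only [pcond, condab]
  constructor
  · rintro ⟨⟨x, y⟩, ⟨⟨⟨hx1, hx2⟩, h⟩, c', hc', heq⟩⟩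
    simp only [Prod.mk.injEq] at heq h ⊢
    obtain ⟨rfl, rfl, rfl⟩ := heq
    exact ⟨h.1, h.2.1, h.2.2.1, h.2.2.2.1, h.2.2.2.2.1, h.2.2.2.2.2.1,
      h.2.2.2.2.2.2.1, h.2.2.2.2.2.2.2, by omega, by omega⟩
  · rintro ⟨h1, h2, h3, h4, h5, h6, h7, h8, h9, h10⟩
    exact ⟨(a, b), ⟨⟨⟨by omega, by omega⟩, ⟨h1, h2, h3, h4, h5, h6, h7, h8⟩⟩,
      ⟨c, ⟨by omega, by omega⟩, rfl⟩⟩⟩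

lemma card_F (t : ℕ) :
    (F t).card = ∑ ab ∈ G t, ((t:ℤ) - 1 - 2*(ab.1.natAbs + ab.2.natAbs)).toNat := by
  rw [F, Finset.card_biUnion]
  · refine Finset.sum_congr rfl fun ab _ => ?_
    rw [Finset.card_image_of_injective _ (fun x y h => by simpa using h)]
    rw [Int.card_Icc]
    congr 1
    ring
  · intro x hx y hy hxy
    rw [Function.onFun, Finset.disjoint_left]
    intro p hp hq
    simp only [mem_image, mem_Icc] at hp
    obtain ⟨c, -, rfl⟩ := hp
    simp only [mem_image, mem_Icc, Prod.mk.injEq] at hq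
    obtain ⟨c', -, -, h2, h3⟩ := hq
    exact hxy (Prod.ext h2.symm h3.symm)

theorem phi_magic (t : ℕ) (c a b : ℤ) (hp : pcond t c a b) :
    IsBoundedMagicSquare3 t (Phi c a b) := by
  obtain ⟨h1, h2, h3, h4, h5, h6, h7, h8, h9, h10⟩ := hp
  refine ⟨?_, ?_, (3*c).toNat, ?_, ?_, ?_, ?_⟩
  · intro i j; fin_cases i <;> fin_cases j <;> simp only [Phi, off] <;> omega
  · intro q r hqr
    simp only at hqr
    fin_cases q <;> fin_cases r <;>
      simp only [Phi, off] at hqr ⊢ <;> omega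
  · intro i; fin_cases i <;> simp only [Fin.sum_univ_three, Phi, off] <;> omega
  · intro j; fin_cases j <;> simp only [Fin.sum_univ_three, Phi, off] <;> omega
  · simp only [Phi, off]; omega
  · simp only [Phi, off]; omega

set_option maxHeartbeats 1000000 in
theorem magic_phi (t : ℕ) (M : Matrix (Fin 3) (Fin 3) ℕ)
    (hM : IsBoundedMagicSquare3 t M) :
    ∃ c a b : ℤ, pcond t c a b ∧ Phi c a b = M := by
  obtain ⟨hb, hinj, s, hrow, hcol, hd1, hd2⟩ := hM
  have hr0 := hrow 0; have hr1 := hrow 1; have hr2 := hrow 2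
  have hc0 := hcol 0; have hc1 := hcol 1; have hc2 := hcol 2
  simp only [Fin.sum_univ_three] at hr0 hr1 hr2 hc0 hc1 hc2
  have hkey : s = 3 * M 1 1 := by omega
  have f01 : M 0 1 + M 0 0 + M 0 2 = 3 * M 1 1 := by omega
  have f21 : M 2 1 + M 1 1 = M 0 0 + M 0 2 := by omega
  have f20 : M 2 0 + M 0 2 = 2 * M 1 1 := by omega
  have f22 : M 2 2 + M 0 0 = 2 * M 1 1 := by omega
  have f10 : M 1 0 + M 0 0 = M 1 1 + M 0 2 := by omega
  have f12 : M 1 2 + M 0 2 = M 1 1 + M 0 0 := by omega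
  have hb00 := hb 0 0; have hb01 := hb 0 1; have hb02 := hb 0 2
  have hb10 := hb 1 0; have hb11 := hb 1 1; have hb12 := hb 1 2
  have hb20 := hb 2 0; have hb21 := hb 2 1; have hb22 := hb 2 2
  have ne' : ∀ p q : Fin 3 × Fin 3, p ≠ q → M p.1 p.2 ≠ M q.1 q.2 := by
    intro p q hpq h; exact hpq (hinj h)
  have n1 : M 0 0 ≠ M 1 1 := ne' (0,0) (1,1) (by decide)
  have n2 : M 0 2 ≠ M 1 1 := ne' (0,2) (1,1) (by decide)
  have n3 : M 0 0 ≠ M 0 2 := ne' (0,0) (0,2) (by decide)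
  have n4 : M 0 1 ≠ M 1 1 := ne' (0,1) (1,1) (by decide)
  have n10 : M 1 2 ≠ M 2 2 := ne' (1,2) (2,2) (by decide)
  have n11 : M 2 1 ≠ M 2 2 := ne' (2,1) (2,2) (by decide)
  have n12 : M 1 0 ≠ M 2 0 := ne' (1,0) (2,0) (by decide)
  have n13 : M 2 1 ≠ M 2 0 := ne' (2,1) (2,0) (by decide)
  refine ⟨(M 1 1 : ℤ), (M 0 0 : ℤ) - M 1 1, (M 0 2 : ℤ) - M 1 1,
    ⟨?_, ?_, ?_, ?_, ?_, ?_, ?_, ?_, ?_, ?_⟩, ?_⟩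
  · clear * - n1; omega
  · clear * - n2; omega
  · clear * - n3; omega
  · clear * - n4 f01; omega
  · clear * - n10 f12 f22; omega
  · clear * - n11 f21 f22; omega
  · clear * - n12 f10 f20; omega
  · clear * - n13 f21 f20; omega
  · clear * - f01 f21 f10 f12 hb01 hb21 hb10 hb12; omega
  · clear * - f01 f21 f10 f12 hb01 hb21 hb10 hb12; omega
  · have g00 : ((M 1 1:ℤ) + ((M 0 0:ℤ) - M 1 1)).toNat = M 0 0 := by clear * - ; omega
    have g01 : ((M 1 1:ℤ) + (-((M 0 0:ℤ) - M 1 1) - ((M 0 2:ℤ) - M 1 1))).toNat = M 0 1 := by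
      clear * - f01 hb01; omega
    have g02 : ((M 1 1:ℤ) + ((M 0 2:ℤ) - M 1 1)).toNat = M 0 2 := by clear * - ; omega
    have g10 : ((M 1 1:ℤ) + (-((M 0 0:ℤ) - M 1 1) + ((M 0 2:ℤ) - M 1 1))).toNat = M 1 0 := by
      clear * - f10 hb10; omega
    have g11 : ((M 1 1:ℤ) + 0).toNat = M 1 1 := by clear * - ; omega
    have g12 : ((M 1 1:ℤ) + (((M 0 0:ℤ) - M 1 1) - ((M 0 2:ℤ) - M 1 1))).toNat = M 1 2 := by
      clear * - f12 hb12; omega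
    have g20 : ((M 1 1:ℤ) + -((M 0 2:ℤ) - M 1 1)).toNat = M 2 0 := by
      clear * - f20 hb20; omega
    have g21 : ((M 1 1:ℤ) + (((M 0 0:ℤ) - M 1 1) + ((M 0 2:ℤ) - M 1 1))).toNat = M 2 1 := by
      clear * - f21 hb21; omega
    have g22 : ((M 1 1:ℤ) + -((M 0 0:ℤ) - M 1 1)).toNat = M 2 2 := by
      clear * - f22 hb22; omega
    funext i j
    fin_cases i <;> fin_cases j
    exacts [g00, g01, g02, g10, g11, g12, g20, g21, g22]

lemma pcond_pos (t : ℕ) (c a b : ℤ) (h : pcond t c a b) :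
    1 ≤ c + a ∧ 1 ≤ c + b ∧ 1 ≤ c := by
  obtain ⟨h1, h2, h3, h4, h5, h6, h7, h8, h9, h10⟩ := h
  omega

theorem c3_eq_card (t : ℕ) : c3 t = (F t).card := by
  have himg : {M : Matrix (Fin 3) (Fin 3) ℕ | IsBoundedMagicSquare3 t M}
      = (fun p : ℤ × ℤ × ℤ => Phi p.1 p.2.1 p.2.2) '' ↑(F t) := by
    ext M
    constructor
    · intro hM
      obtain ⟨c, a, b, hp, hPhi⟩ := magic_phi t M hM
      exact ⟨(c, a, b), (mem_F t _).2 hp, hPhi⟩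
    · rintro ⟨⟨c, a, b⟩, hp, rfl⟩
      exact phi_magic t c a b ((mem_F t _).1 hp)
  have hinj : Set.InjOn (fun p : ℤ × ℤ × ℤ => Phi p.1 p.2.1 p.2.2) ↑(F t) := by
    rintro ⟨c, a, b⟩ hp ⟨c', a', b'⟩ hq heq
    simp only at heq
    have hp' := pcond_pos t c a b ((mem_F t _).1 hp)
    have hq' := pcond_pos t c' a' b' ((mem_F t _).1 hq)
    have h11 := congrFun (congrFun heq 1) 1
    have h00 := congrFun (congrFun heq 0) 0
    have h02 := congrFun (congrFun heq 0) 2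
    norm_num [Phi, off] at h11 h00 h02
    have hc : c = c' := by omega
    subst hc
    have ha : a = a' := by omega
    have hbb : b = b' := by omega
    simp [ha, hbb]
  rw [c3, himg, Set.ncard_image_of_injOn hinj, Set.ncard_coe_finset]

lemma sum_G_eq (t : ℕ) :
    ∑ ab ∈ G t, ((t:ℤ) - 1 - 2*(ab.1.natAbs + ab.2.natAbs)).toNat
      = ∑ ab ∈ Np t, 4 * (t - 1 - 2*(ab.1 + ab.2)) := by
  have hmaps : ∀ x ∈ G t, ((x.1.natAbs:ℤ), (x.2.natAbs:ℤ)) ∈ Gp t := by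
    rintro ⟨a, b⟩ hx
    simp only [G, mem_filter, mem_product, mem_Icc] at hx
    simp only [condab] at hx
    simp only [Gp, mem_filter, mem_product, mem_Icc]
    omega
  rw [← Finset.sum_fiberwise_of_maps_to hmaps]
  rw [show (∑ ab ∈ Np t, 4 * (t - 1 - 2*(ab.1 + ab.2)))
      = ∑ ab ∈ Gp t, 4 * ((t:ℤ) - 1 - 2*(ab.1.natAbs + ab.2.natAbs)).toNat from ?_]
  · refine Finset.sum_congr rfl fun y hy => ?_
    obtain ⟨u, v⟩ := y
    simp only [Gp, mem_filter, mem_product, mem_Icc] at hy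
    have hfib : (G t).filter
        (fun x => ((x.1.natAbs:ℤ), (x.2.natAbs:ℤ)) = (u, v))
        = {(u,v), (u,-v), (-u,v), (-u,-v)} := by
      ext ⟨a, b⟩
      simp only [G, mem_filter, mem_product, mem_Icc, Prod.mk.injEq,
        mem_insert, mem_singleton]
      simp only [condab]
      omega
    rw [hfib]
    have h1 : ((u,v) : ℤ×ℤ) ∉ ({(u,-v), (-u,v), (-u,-v)} : Finset (ℤ×ℤ)) := by
      simp only [mem_insert, mem_singleton, Prod.mk.injEq]; omega
    have h2 : ((u,-v) : ℤ×ℤ) ∉ ({(-u,v), (-u,-v)} : Finset (ℤ×ℤ)) := by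
      simp only [mem_insert, mem_singleton, Prod.mk.injEq]; omega
    have h3 : ((-u,v) : ℤ×ℤ) ∉ ({(-u,-v)} : Finset (ℤ×ℤ)) := by
      simp only [mem_singleton, Prod.mk.injEq]; omega
    rw [Finset.sum_insert h1, Finset.sum_insert h2, Finset.sum_insert h3,
      Finset.sum_singleton]
    simp only [Int.natAbs_neg]
    ring
  · refine Finset.sum_nbij' (fun ab => ((ab.1:ℤ), (ab.2:ℤ)))
      (fun ab => (ab.1.toNat, ab.2.toNat)) ?_ ?_ ?_ ?_ ?_
    · rintro ⟨a,b⟩ h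
      simp only [Np, mem_filter, mem_product, mem_Icc] at h
      simp only [Gp, mem_filter, mem_product, mem_Icc]
      omega
    · rintro ⟨a,b⟩ h
      simp only [Gp, mem_filter, mem_product, mem_Icc] at h
      simp only [Np, mem_filter, mem_product, mem_Icc]
      omega
    · rintro ⟨a,b⟩ h
      simp only [Prod.mk.injEq]
      constructor <;> omega
    · rintro ⟨a,b⟩ h
      simp only [Gp, mem_filter, mem_product, mem_Icc] at h
      simp only [Prod.mk.injEq]
      constructor <;> omega
    · rintro ⟨a,b⟩ h
      simp only [Np, mem_filter, mem_product, mem_Icc] at h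
      dsimp only
      omega

lemma incl_excl (t : ℕ) :
    ∑ ab ∈ (Finset.Icc 1 t) ×ˢ (Finset.Icc 1 t), (t - 1 - 2*(ab.1 + ab.2))
      = (∑ ab ∈ Np t, (t - 1 - 2*(ab.1 + ab.2)))
        + (∑ a ∈ Finset.Icc 1 t, (t - 1 - 4*a))
        + 2 * (∑ a ∈ Finset.Icc 1 t, (t - 1 - 6*a)) := by
  classical
  set P2 := (Finset.Icc 1 t) ×ˢ (Finset.Icc 1 t) with hP2
  set w : ℕ × ℕ → ℕ := fun ab => t - 1 - 2*(ab.1 + ab.2) with hw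
  have hsplit := Finset.sum_filter_add_sum_filter_not P2
    (fun ab => ab.1 ≠ ab.2 ∧ ab.2 ≠ 2*ab.1 ∧ ab.1 ≠ 2*ab.2) w
  have hNp : P2.filter (fun ab => ab.1 ≠ ab.2 ∧ ab.2 ≠ 2*ab.1 ∧ ab.1 ≠ 2*ab.2) = Np t := rfl
  have hbad : P2.filter (fun ab => ¬(ab.1 ≠ ab.2 ∧ ab.2 ≠ 2*ab.1 ∧ ab.1 ≠ 2*ab.2))
      = (P2.filter (fun ab => ab.1 = ab.2)) ∪
        ((P2.filter (fun ab => ab.2 = 2*ab.1)) ∪ (P2.filter (fun ab => ab.1 = 2*ab.2))) := by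
    ext ⟨a, b⟩
    simp only [Finset.mem_filter, Finset.mem_union, hP2, Finset.mem_product, Finset.mem_Icc]
    constructor
    · rintro ⟨hm, hc⟩
      by_cases h1 : a = b
      · exact Or.inl ⟨hm, h1⟩
      · by_cases h2 : b = 2*a
        · exact Or.inr (Or.inl ⟨hm, h2⟩)
        · exact Or.inr (Or.inr ⟨hm, by tauto⟩)
    · rintro (⟨hm, h⟩ | ⟨hm, h⟩ | ⟨hm, h⟩) <;> exact ⟨hm, by tauto⟩
  have hd1 : Disjoint (P2.filter (fun ab => ab.1 = ab.2))
      ((P2.filter (fun ab => ab.2 = 2*ab.1)) ∪ (P2.filter (fun ab => ab.1 = 2*ab.2))) := by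
    rw [Finset.disjoint_left]
    rintro ⟨a,b⟩ h1 h2
    simp only [Finset.mem_filter, Finset.mem_union, hP2, Finset.mem_product,
      Finset.mem_Icc] at h1 h2
    omega
  have hd2 : Disjoint (P2.filter (fun ab => ab.2 = 2*ab.1))
      (P2.filter (fun ab => ab.1 = 2*ab.2)) := by
    rw [Finset.disjoint_left]
    rintro ⟨a,b⟩ h1 h2
    simp only [Finset.mem_filter, hP2, Finset.mem_product, Finset.mem_Icc] at h1 h2
    omega
  have hline1 : ∑ ab ∈ P2.filter (fun ab => ab.1 = ab.2), w ab
      = ∑ a ∈ Finset.Icc 1 t, (t - 1 - 4*a) := by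
    have himg : P2.filter (fun ab => ab.1 = ab.2)
        = (Finset.Icc 1 t).image (fun a => (a, a)) := by
      ext ⟨a, b⟩
      simp only [Finset.mem_filter, hP2, Finset.mem_product, Finset.mem_Icc,
        Finset.mem_image, Prod.mk.injEq]
      constructor
      · rintro ⟨⟨h1, h2⟩, h3⟩; exact ⟨a, by omega, rfl, by omega⟩
      · rintro ⟨x, hx, rfl, rfl⟩; omega
    rw [himg, Finset.sum_image (fun x _ y _ h => by simpa using congrArg Prod.fst h)]
    refine Finset.sum_congr rfl fun a _ => ?_
    simp only [hw]; omega
  have hline2 : ∑ ab ∈ P2.filter (fun ab => ab.2 = 2*ab.1), w ab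
      = ∑ a ∈ Finset.Icc 1 t, (t - 1 - 6*a) := by
    have himg : P2.filter (fun ab => ab.2 = 2*ab.1)
        = ((Finset.Icc 1 t).filter (fun a => 2*a ≤ t)).image (fun a => (a, 2*a)) := by
      ext ⟨a, b⟩
      simp only [Finset.mem_filter, hP2, Finset.mem_product, Finset.mem_Icc,
        Finset.mem_image, Prod.mk.injEq]
      constructor
      · rintro ⟨⟨h1, h2⟩, h3⟩; exact ⟨a, ⟨by omega, by omega⟩, rfl, by omega⟩
      · rintro ⟨x, hx, rfl, rfl⟩; omega
    rw [himg, Finset.sum_image (fun x _ y _ h => by simpa using congrArg Prod.fst h)]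
    rw [Finset.sum_subset (Finset.filter_subset _ _)]
    · refine Finset.sum_congr rfl fun a _ => ?_
      simp only [hw]; omega
    · intro x hx hnx
      simp only [Finset.mem_Icc] at hx
      simp only [Finset.mem_filter, Finset.mem_Icc] at hnx
      simp only [hw]
      omega
  have hline3 : ∑ ab ∈ P2.filter (fun ab => ab.1 = 2*ab.2), w ab
      = ∑ a ∈ Finset.Icc 1 t, (t - 1 - 6*a) := by
    have himg : P2.filter (fun ab => ab.1 = 2*ab.2)
        = ((Finset.Icc 1 t).filter (fun a => 2*a ≤ t)).image (fun a => (2*a, a)) := by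
      ext ⟨a, b⟩
      simp only [Finset.mem_filter, hP2, Finset.mem_product, Finset.mem_Icc,
        Finset.mem_image, Prod.mk.injEq]
      constructor
      · rintro ⟨⟨h1, h2⟩, h3⟩; exact ⟨b, ⟨by omega, by omega⟩, by omega, rfl⟩
      · rintro ⟨x, hx, rfl, rfl⟩; omega
    rw [himg, Finset.sum_image (fun x _ y _ h => by simpa using congrArg Prod.snd h)]
    rw [Finset.sum_subset (Finset.filter_subset _ _)]
    · refine Finset.sum_congr rfl fun a _ => ?_
      simp only [hw]; omega
    · intro x hx hnx
      simp only [Finset.mem_Icc] at hx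
      simp only [Finset.mem_filter, Finset.mem_Icc] at hnx
      simp only [hw]
      omega
  rw [hbad, Finset.sum_union hd1, Finset.sum_union hd2, hNp, hline1, hline2, hline3] at hsplit
  rw [← hsplit]
  ring

lemma helper_lin (A d : ℕ) : ∀ n : ℕ, d*n ≤ A →
    2 * (∑ a ∈ Finset.Icc 1 n, (A - d*a)) + d*n*(n+1) = 2*A*n := by
  intro n
  induction n with
  | zero => simp
  | succ n ih =>
    intro h
    have hdn : d*n ≤ A := le_trans (Nat.mul_le_mul_left d (Nat.le_succ n)) h
    specialize ih hdn
    rw [Finset.sum_Icc_succ_top (by omega : 1 ≤ n+1)]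
    zify [h] at *
    linear_combination ih

lemma helper_tail (A d n t : ℕ) (hn : n ≤ t) (hA : A ≤ d*(n+1)) :
    ∑ a ∈ Finset.Icc 1 t, (A - d*a) = ∑ a ∈ Finset.Icc 1 n, (A - d*a) := by
  refine (Finset.sum_subset (Finset.Icc_subset_Icc le_rfl hn) ?_).symm
  intro x hx hnx
  simp only [Finset.mem_Icc] at hx hnx
  have hx1 : n + 1 ≤ x := by omega
  have : d*(n+1) ≤ d*x := Nat.mul_le_mul_left d hx1
  omega

lemma helper_quad (K : ℕ) : ∀ n : ℕ, n ≤ K →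
    6 * (∑ a ∈ Finset.Icc 1 n, (K+1-a)*(K-a)) + 3*(2*K+1)*n*(n+1)
      = 6*n*K^2 + 6*n*K + n*(n+1)*(2*n+1) := by
  intro n
  induction n with
  | zero => simp
  | succ n ih =>
    intro h
    specialize ih (by omega)
    rw [Finset.sum_Icc_succ_top (by omega : 1 ≤ n+1)]
    have h1 : n + 1 ≤ K := h
    zify [show n+1 ≤ K+1 by omega, h1] at *
    linear_combination ih

lemma S_eval (t K : ℕ) (ht : t = 2*K+3) :
    6 * (∑ ab ∈ (Finset.Icc 1 t) ×ˢ (Finset.Icc 1 t), (t - 1 - 2*(ab.1 + ab.2))) + 2*K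
      = 2*K^3 := by
  subst ht
  rw [Finset.sum_product]
  have hin : ∀ a : ℕ, (∑ b ∈ Finset.Icc 1 (2*K+3), (2*K+3 - 1 - 2*(a + b)))
      = (K+1-a)*(K-a) := by
    intro a
    have e : ∀ b : ℕ, (2*K+3 - 1 - 2*(a + b)) = (2*K+2-2*a) - 2*b := by intro b; omega
    rw [Finset.sum_congr rfl (fun b _ => e b)]
    rw [helper_tail (2*K+2-2*a) 2 (K+1-a) (2*K+3) (by omega) (by omega)]
    have hh := helper_lin (2*K+2-2*a) 2 (K+1-a) (by omega)
    have hp : 2*((K+1-a)*(K-a)) + 2*(K+1-a)*((K+1-a)+1) = 2*(2*K+2-2*a)*(K+1-a) := by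
      rcases le_or_gt a K with hc | hc
      · zify [show a ≤ K+1 by omega, hc, show 2*a ≤ 2*K+2 by omega]
        ring
      · have h0 : K+1-a = 0 := by omega
        have h0' : K-a = 0 := by omega
        rw [h0, h0']
        simp
    linarith [hh, hp]
  rw [Finset.sum_congr rfl (fun a _ => hin a)]
  rw [← Finset.sum_subset (Finset.Icc_subset_Icc le_rfl (by omega : K ≤ 2*K+3))
    (by intro x hx hnx; simp only [Finset.mem_Icc] at hx hnx
        have : K+1-x = 0 := by omega
        rw [this]; ring)]
  have hq := helper_quad K K le_rfl
  zify at *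
  linear_combination hq

lemma L1_eval (t K : ℕ) (ht : t = 2*K+3) (he : K % 2 = 0) :
    2 * (∑ a ∈ Finset.Icc 1 t, (t - 1 - 4*a)) = K^2 := by
  obtain ⟨p, rfl⟩ : ∃ p, K = 2*p := ⟨K/2, by omega⟩
  subst ht
  rw [Finset.sum_congr rfl (fun a _ => show 2*(2*p)+3 - 1 - 4*a = (4*p+2) - 4*a by omega)]
  rw [helper_tail (4*p+2) 4 p _ (by omega) (by omega)]
  have hh := helper_lin (4*p+2) 4 p (by omega)
  zify at *
  linear_combination hh

lemma L2_eval (t K : ℕ) (ht : t = 2*K+3) (h6 : K % 6 = 0 ∨ K % 6 = 4) :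
    6 * (∑ a ∈ Finset.Icc 1 t, (t - 1 - 6*a)) + 2*K = 2*K^2 := by
  subst ht
  rw [Finset.sum_congr rfl (fun a _ => show 2*K+3 - 1 - 6*a = (2*K+2) - 6*a by omega)]
  rcases h6 with h6 | h6
  · obtain ⟨r, rfl⟩ : ∃ r, K = 6*r := ⟨K/6, by omega⟩
    rw [helper_tail (2*(6*r)+2) 6 (2*r) _ (by omega) (by omega)]
    have hh := helper_lin (2*(6*r)+2) 6 (2*r) (by omega)
    zify at *
    linear_combination 3*hh
  · obtain ⟨r, rfl⟩ : ∃ r, K = 6*r+4 := ⟨K/6, by omega⟩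
    rw [helper_tail (2*(6*r+4)+2) 6 (2*r+1) _ (by omega) (by omega)]
    have hh := helper_lin (2*(6*r+4)+2) 6 (2*r+1) (by omega)
    zify at *
    linear_combination 3*hh

theorem c3_closed (t K : ℕ) (ht : t = 2*K+3) (h6 : K % 6 = 0 ∨ K % 6 = 4) :
    3 * c3 t + 14 * K^2 = 4*K^3 + 4*K := by
  have he : K % 2 = 0 := by omega
  have hc : c3 t = 4 * ∑ ab ∈ Np t, (t - 1 - 2*(ab.1 + ab.2)) := by
    rw [c3_eq_card t, card_F t, sum_G_eq t, ← Finset.mul_sum]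
  have h4 := incl_excl t
  have h5 := S_eval t K ht
  have h6' := L1_eval t K ht he
  have h7 := L2_eval t K ht h6
  set W := ∑ ab ∈ Np t, (t - 1 - 2*(ab.1 + ab.2)) with hW
  set S := ∑ ab ∈ (Finset.Icc 1 t) ×ˢ (Finset.Icc 1 t), (t - 1 - 2*(ab.1 + ab.2)) with hS
  set L1 := ∑ a ∈ Finset.Icc 1 t, (t - 1 - 4*a) with hL1
  set L2 := ∑ a ∈ Finset.Icc 1 t, (t - 1 - 6*a) with hL2
  zify at hc h4 h5 h6' h7 ⊢
  linear_combination 3*hc - 12*h4 + 2*h5 - 6*h6' - 4*h7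

theorem c3_formula_mod12_3_11 (t : ℕ) (ht : 0 < t) (h : t % 12 = 3 ∨ t % 12 = 11) :
    (c3 t : ℚ) = ((t : ℚ) ^ 3 - 16 * (t : ℚ) ^ 2 + 73 * (t : ℚ) - 102) / 6 := by
  obtain ⟨K, hK, h6⟩ : ∃ K, t = 2*K+3 ∧ (K % 6 = 0 ∨ K % 6 = 4) :=
    ⟨(t-3)/2, by omega, by omega⟩
  have hcl := MS3.c3_closed t K hK h6
  have hq : 3 * (c3 t : ℚ) + 14 * (K:ℚ)^2 = 4*(K:ℚ)^3 + 4*(K:ℚ) := by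
    exact_mod_cast hcl
  have htq : (t:ℚ) = 2*(K:ℚ) + 3 := by
    rw [hK]; push_cast; ring
  rw [htq, eq_div_iff (by norm_num : (6:ℚ) ≠ 0)]
  linear_combination 2*hq

end MS3

theorem c3_formula_mod12_3_11 (t : ℕ) (ht : 0 < t) (h : t % 12 = 3 ∨ t % 12 = 11) :
    (c3 t : ℚ) = ((t : ℚ) ^ 3 - 16 * (t : ℚ) ^ 2 + 73 * (t : ℚ) - 102) / 6 := by
  exact MS3.c3_formula_mod12_3_11 t ht h
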